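/- Identifiability of symmetric dynamics: let X(t) solve Ẋ = NX with N symmetric, let S(t) be a differentiable path in O(d), and set X̃ = XS. Assume X̃(t) has full column rank for all t. If there exists a (possibly time-varying) symmetric matrix Ñ(t) with X̃'(t) = Ñ(t) X̃(t) for all t, then S'(t) = 0 for all t; i.e., S is constant. Conversely, if S is constant then X̃' = N X̃ with N symmetric. -/

import Mathlib

open Matrix
set_option maxHeartbeats 1000000

lemma hasDerivAt_matmul {m p q : Type*} [Fintype m] [Fintype p] [Fintype q]
    (A : ℝ → Matrix m p ℝ) (B : ℝ → Matrix p q ℝ)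
    (A' : Matrix m p ℝ) (B' : Matrix p q ℝ) (t : ℝ)
    (hA : ∀ i j, HasDerivAt (fun s => A s i j) (A' i j) t)
    (hB : ∀ i j, HasDerivAt (fun s => B s i j) (B' i j) t)
    (i : m) (j : q) :
    HasDerivAt (fun s => (A s * B s) i j) ((A' * B t + A t * B') i j) t := by
  have h : HasDerivAt (fun s => ∑ k, A s i k * B s k j)
      (∑ k, (A' i k * B t k j + A t i k * B' k j)) t :=
    HasDerivAt.fun_sum fun k _ => (hA i k).mul (hB k j)
  simpa [Matrix.mul_apply, Matrix.add_apply, Finset.sum_add_distrib] using h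

lemma trace_transpose_mul_self_eq_zero' {m p : ℕ} (B : Matrix (Fin m) (Fin p) ℝ)
    (h : (Bᵀ * B).trace = 0) : B = 0 := by
  have hnn : ∀ j : Fin p, 0 ≤ (Bᵀ * B) j j := by
    intro j
    simp only [Matrix.mul_apply, Matrix.transpose_apply]
    exact Finset.sum_nonneg fun i _ => mul_self_nonneg _
  have hd : ∀ j : Fin p, (Bᵀ * B) j j = 0 := by
    have := (Finset.sum_eq_zero_iff_of_nonneg (fun j _ => hnn j)).mp h
    intro j; exact this j (Finset.mem_univ j)
  ext i j
  have := hd j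
  simp only [Matrix.mul_apply, Matrix.transpose_apply] at this
  have hv : (fun i => B i j) = 0 := dotProduct_self_eq_zero.mp this
  exact congrFun hv i

lemma mulVec_inj_of_rank {n d : ℕ} (A : Matrix (Fin n) (Fin d) ℝ) (h : A.rank = d) :
    ∀ v : Fin d → ℝ, A *ᵥ v = 0 → v = 0 := by
  intro v hv
  have hrn := LinearMap.finrank_range_add_finrank_ker A.mulVecLin
  rw [show Module.finrank ℝ (LinearMap.range A.mulVecLin) = A.rank from rfl, h,
    Module.finrank_fintype_fun_eq_card, Fintype.card_fin] at hrn
  have hker : Module.finrank ℝ (LinearMap.ker A.mulVecLin) = 0 := by omega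
  have : LinearMap.ker A.mulVecLin = ⊥ := Submodule.finrank_eq_zero.mp hker
  have hmem : v ∈ LinearMap.ker A.mulVecLin := by
    simpa [LinearMap.mem_ker, Matrix.mulVecLin_apply] using hv
  rw [this] at hmem
  simpa using hmem

theorem symmetric_dynamics_identifiability {n d : ℕ}
    (N : Matrix (Fin n) (Fin n) ℝ) (hN : Nᵀ = N)
    (X : ℝ → Matrix (Fin n) (Fin d) ℝ)
    (S S' : ℝ → Matrix (Fin d) (Fin d) ℝ)
    (hX : ∀ t, ∀ i j, HasDerivAt (fun s => X s i j) ((N * X t) i j) t)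
    (hS : ∀ t, ∀ i j, HasDerivAt (fun s => S s i j) (S' t i j) t)
    (hOrth : ∀ t, (S t)ᵀ * S t = 1)
    (hrank : ∀ t, (X t * S t).rank = d) :
    ((∃ Ntil : ℝ → Matrix (Fin n) (Fin n) ℝ,
        (∀ t, (Ntil t)ᵀ = Ntil t) ∧
        (∀ t, ∀ i j, HasDerivAt (fun s => (X s * S s) i j)
          ((Ntil t * (X t * S t)) i j) t)) →
      ∀ t, S' t = 0) ∧
    ((∀ t, S' t = 0) →
      ∀ t, ∀ i j, HasDerivAt (fun s => (X s * S s) i j)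
        ((N * (X t * S t)) i j) t) := by
  constructor
  · rintro ⟨Ntil, hNsym, hNd⟩ t
    obtain ⟨A, hA⟩ : ∃ A, A = X t * S t := ⟨_, rfl⟩
    obtain ⟨Ω, hΩ⟩ : ∃ Ω, Ω = (S t)ᵀ * S' t := ⟨_, rfl⟩
    obtain ⟨G, hG⟩ : ∃ G, G = Aᵀ * A := ⟨_, rfl⟩
    -- derivative of the product
    have hprod : ∀ i j, HasDerivAt (fun s => (X s * S s) i j)
        ((N * X t * S t + X t * S' t) i j) t :=
      hasDerivAt_matmul X S (N * X t) (S' t) t (hX t) (hS t)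
    -- uniqueness of derivatives
    have hEq : Ntil t * A = N * A + X t * S' t := by
      ext i j
      have h := (hNd t i j).unique (hprod i j)
      rw [hA]
      simpa [Matrix.mul_assoc] using h
    -- skewness of Ω
    have hSST : S t * (S t)ᵀ = 1 := mul_eq_one_comm.mp (hOrth t)
    have hskew : (S' t)ᵀ * S t + (S t)ᵀ * S' t = 0 := by
      ext i j
      have hconst : HasDerivAt (fun s => ((S s)ᵀ * S s) i j) 0 t := by
        have he : (fun s => ((S s)ᵀ * S s) i j)
            = fun _ => (1 : Matrix (Fin d) (Fin d) ℝ) i j := by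
          funext s; rw [hOrth s]
        rw [he]; exact hasDerivAt_const t _
      have hder : HasDerivAt (fun s => ((S s)ᵀ * S s) i j)
          (((S' t)ᵀ * S t + (S t)ᵀ * S' t) i j) t :=
        hasDerivAt_matmul (fun s => (S s)ᵀ) S ((S' t)ᵀ) (S' t) t
          (fun i j => hS t j i) (hS t) i j
      have := hder.unique hconst
      simpa using this
    have hΩskew : Ωᵀ = -Ω := by
      have h : (S' t)ᵀ * S t = -((S t)ᵀ * S' t) := by
        rw [eq_neg_iff_add_eq_zero]; exact hskew
      rw [hΩ, transpose_mul, transpose_transpose, h]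
    -- X t * S' t = A * Ω
    have hXS' : X t * S' t = A * Ω := by
      rw [hA, hΩ, Matrix.mul_assoc (X t) (S t),
        ← Matrix.mul_assoc (S t) ((S t)ᵀ) (S' t), hSST, Matrix.one_mul]
    have hGsym : Gᵀ = G := by rw [hG, transpose_mul, transpose_transpose]
    -- G * Ω is symmetric
    have hGΩsym : (G * Ω)ᵀ = G * Ω := by
      have h1 : G * Ω = Aᵀ * (Ntil t * A) - Aᵀ * (N * A) := by
        rw [hG, Matrix.mul_assoc, ← hXS', hEq, Matrix.mul_add, add_sub_cancel_left]
      have h2 : (Aᵀ * (Ntil t * A))ᵀ = Aᵀ * (Ntil t * A) := by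
        rw [← Matrix.mul_assoc, transpose_mul, transpose_mul, transpose_transpose,
          hNsym t, Matrix.mul_assoc]
      have h3 : (Aᵀ * (N * A))ᵀ = Aᵀ * (N * A) := by
        rw [← Matrix.mul_assoc, transpose_mul, transpose_mul, transpose_transpose,
          hN, Matrix.mul_assoc]
      rw [h1, transpose_sub, h2, h3]
    -- hence G Ω = - Ω G
    have hanti : G * Ω = -(Ω * G) := by
      calc G * Ω = (G * Ω)ᵀ := hGΩsym.symm
        _ = Ωᵀ * Gᵀ := transpose_mul _ _
        _ = -(Ω * G) := by rw [hΩskew, hGsym, Matrix.neg_mul]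
    -- trace argument
    have htr0 : (Ω * G * Ω).trace = 0 := by
      have h1 : (Ω * G * Ω).trace = (G * Ω * Ω).trace := (trace_mul_cycle G Ω Ω).symm
      have h2 : G * Ω * Ω = -(Ω * G * Ω) := by rw [hanti, Matrix.neg_mul]
      rw [h2, trace_neg] at h1
      linarith
    have hB0 : A * Ω = 0 := by
      apply trace_transpose_mul_self_eq_zero'
      have he : (A * Ω)ᵀ * (A * Ω) = -(Ω * G * Ω) := by
        rw [transpose_mul, hΩskew, hG]
        simp only [Matrix.neg_mul, Matrix.mul_neg, neg_inj, Matrix.mul_assoc]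
      rw [he, trace_neg, htr0, neg_zero]
    -- conclude Ω = 0
    have hΩ0 : Ω = 0 := by
      ext k j
      have hcol : A *ᵥ (fun k => Ω k j) = 0 := by
        funext i
        have := congrFun (congrFun hB0 i) j
        simpa [Matrix.mul_apply, Matrix.mulVec, dotProduct] using this
      have hv := mulVec_inj_of_rank A (by rw [hA]; exact hrank t) _ hcol
      exact congrFun hv k
    -- S' t = S t * Ω
    have hfin : S' t = S t * Ω := by
      rw [hΩ, ← Matrix.mul_assoc, hSST, Matrix.one_mul]
    rw [hfin, hΩ0, Matrix.mul_zero]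
  · intro h0 t i j
    have h := hasDerivAt_matmul X S (N * X t) (S' t) t (hX t) (hS t) i j
    rw [h0 t] at h
    simpa [Matrix.mul_assoc] using h
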